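/- For n ≥ 7, the maximum of |C_{A_n}(x)| over all non-identity elements x of S_n equals (n−2)!, attained when x is a transposition. -/

import Mathlib

open Equiv Equiv.Perm

section helpers
variable {β : Type*} [Fintype β] [DecidableEq β]

lemma myCardCompl (s : Finset β) : Fintype.card {c : β // c ∉ s} = Fintype.card β - s.card := by
  have := Fintype.card_subtype_compl (fun c : β => c ∈ s)
  simpa [Fintype.card_coe] using this

lemma myAltCard (h : 1 < Fintype.card β) : 2 * Nat.card (alternatingGroup β) = (Fintype.card β).factorial := by
  have : Nontrivial β := Fintype.one_lt_card_iff_nontrivial.1 h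
  rw [Nat.card_eq_fintype_card, two_mul_card_alternatingGroup, Fintype.card_perm]

lemma myCardLeAlt {G : Type*} [Group G] [Finite G] (ι : G →* Perm β)
    (hι : Function.Injective ι) (s : Finset β)
    (hfix : ∀ g, ∀ c ∈ s, ι g c = c) (hsign : ∀ g, Perm.sign (ι g) = 1)
    (hlt : 1 < Fintype.card β - s.card) :
    2 * Nat.card G ≤ (Fintype.card β - s.card).factorial := by
  have h₁ : ∀ g : G, ∀ c : β, c ∉ s ↔ ι g c ∉ s := by
    intro g c
    constructor
    · intro hc hm
      exact hc (by
        have := hfix g _ hm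
        have h2 : ι g c = c := (ι g).injective (by rw [this])
        rwa [← h2])
    · intro h hc
      exact h (by rw [hfix g c hc]; exact hc)
  have h₂ : ∀ g : G, ∀ c : β, ι g c ≠ c → c ∉ s := fun g c h hc => h (hfix g c hc)
  set p : β → Prop := fun c => c ∉ s with hp
  let F : G → alternatingGroup {c : β // c ∉ s} := fun g =>
    ⟨Perm.subtypePerm (ι g) (fun c => (h₁ g c).symm), by
      rw [Equiv.Perm.mem_alternatingGroup, Perm.sign_subtypePerm (ι g) (fun c => (h₁ g c).symm) (h₂ g), hsign]⟩
  have hF : Function.Injective F := by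
    intro g1 g2 hg
    apply hι
    ext c
    by_cases hc : c ∈ s
    · rw [hfix g1 c hc, hfix g2 c hc]
    · have := congrArg (fun (u : alternatingGroup {c : β // c ∉ s}) => ((u : Perm {c : β // c ∉ s}) ⟨c, hc⟩ : {c : β // c ∉ s}).1) hg
      simpa [F, Perm.subtypePerm_apply] using this
  have hle : Nat.card G ≤ Nat.card (alternatingGroup {c : β // c ∉ s}) :=
    Nat.card_le_card_of_injective F hF
  calc 2 * Nat.card G ≤ 2 * Nat.card (alternatingGroup {c : β // c ∉ s}) := by omega
    _ = (Fintype.card {c : β // c ∉ s}).factorial := myAltCard (by rw [myCardCompl]; exact hlt)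
    _ = (Fintype.card β - s.card).factorial := by rw [myCardCompl]

end helpers

section swap
variable {n : ℕ}

lemma mySwapCard (hn : 2 ≤ n) {a b : Fin n} (hab : a ≠ b) :
    Nat.card {g : alternatingGroup (Fin n) // Commute (g : Equiv.Perm (Fin n)) (Equiv.swap a b)} =
      (n - 2).factorial := by
  set x : Perm (Fin n) := Equiv.swap a b with hx
  have hxodd : Perm.sign x = -1 := Perm.sign_swap hab
  -- the target pair-stabilizer set
  let K := {h : Perm (Fin n) // h a = a ∧ h b = b}
  -- key fact: commuting elements preserve {a, b}
  have key : ∀ g : Perm (Fin n), Commute g x → (g a = a ∧ g b = b) ∨ (g a = b ∧ g b = a) := by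
    intro g hg
    have hga : x (g a) = g b := by
      have := congrFun (congrArg (fun u : Perm (Fin n) => (u : Fin n → Fin n)) hg.symm) a
      simpa [x, Equiv.swap_apply_left] using this
    by_cases h1 : g a = a
    · left
      refine ⟨h1, ?_⟩
      rw [← hga, h1, hx, Equiv.swap_apply_left]
    · by_cases h2 : g a = b
      · right
        refine ⟨h2, ?_⟩
        rw [← hga, h2, hx, Equiv.swap_apply_right]
      · exfalso
        have : x (g a) = g a := Equiv.swap_apply_of_ne_of_ne h1 h2
        rw [hga] at this
        exact hab (g.injective this).symm
  classical
  let φ : {g : alternatingGroup (Fin n) // Commute (g : Perm (Fin n)) x} → K := fun g =>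
    if h : (g : Perm (Fin n)) a = a then
      ⟨(g : Perm (Fin n)), h, by
        rcases key _ g.2 with ⟨h1, h2⟩ | ⟨h1, h2⟩
        · exact h2
        · exact absurd h (by rw [h1]; exact hab.symm)⟩
    else
      ⟨(g : Perm (Fin n)) * x, by
        rcases key _ g.2 with ⟨h1, h2⟩ | ⟨h1, h2⟩
        · exact absurd h1 h
        · simpa [x, Equiv.swap_apply_left] using h2, by
        rcases key _ g.2 with ⟨h1, h2⟩ | ⟨h1, h2⟩
        · exact absurd h1 h
        · simpa [x, Equiv.swap_apply_right] using h1⟩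
  have hbij : Function.Bijective φ := by
    constructor
    · rintro ⟨⟨g1, hg1⟩, hc1⟩ ⟨⟨g2, hg2⟩, hc2⟩ h
      simp only [φ] at h
      split_ifs at h with k1 k2 k2 <;>
        simp only [Subtype.ext_iff, Subtype.mk.injEq] at h ⊢
      · exact show g1 = g2 from congrArg Subtype.val h
      · exfalso
        have : g1 = g2 * x := congrArg Subtype.val h
        have hs1 : Perm.sign g1 = 1 := (Perm.mem_alternatingGroup).1 hg1
        have hs2 : Perm.sign g2 = 1 := (Perm.mem_alternatingGroup).1 hg2
        rw [this, map_mul, hs2, hxodd] at hs1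
        simp at hs1
      · exfalso
        have : g1 * x = g2 := congrArg Subtype.val h
        have hs1 : Perm.sign g1 = 1 := (Perm.mem_alternatingGroup).1 hg1
        have hs2 : Perm.sign g2 = 1 := (Perm.mem_alternatingGroup).1 hg2
        rw [← this, map_mul, hs1, hxodd] at hs2
        simp at hs2
      · exact mul_right_cancel (show g1 * x = g2 * x from congrArg Subtype.val h)
    · rintro ⟨h, ha, hb⟩
      have hcomm : Commute h x := by
        ext c
        simp only [Perm.coe_mul, Function.comp_apply]
        by_cases hc1 : c = a
        · subst hc1; rw [hx]; rw [Equiv.swap_apply_left, hb, ha, Equiv.swap_apply_left]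
        · by_cases hc2 : c = b
          · subst hc2; rw [hx]; rw [Equiv.swap_apply_right, ha, hb, Equiv.swap_apply_right]
          · rw [hx, Equiv.swap_apply_of_ne_of_ne hc1 hc2,
              Equiv.swap_apply_of_ne_of_ne (fun hh => hc1 (h.injective (by rw [hh, ha])))
                (fun hh => hc2 (h.injective (by rw [hh, hb])))]
      rcases Int.units_eq_one_or (Perm.sign h) with hs | hs
      · refine ⟨⟨⟨h, (Perm.mem_alternatingGroup).2 hs⟩, hcomm⟩, ?_⟩
        simp only [φ]
        rw [dif_pos ha]
      · refine ⟨⟨⟨h * x, (Perm.mem_alternatingGroup).2 (by rw [map_mul, hs, hxodd]; decide)⟩,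
          (hcomm.mul_left (Commute.refl x))⟩, ?_⟩
        simp only [φ]
        have hxa : (h * x) a = b := by rw [Perm.mul_apply, hx, Equiv.swap_apply_left, hb]
        rw [dif_neg (by rw [hxa]; exact hab.symm)]
        apply Subtype.ext
        simp only
        rw [mul_assoc, hx, Equiv.swap_mul_self, mul_one]
  have : Nat.card {g : alternatingGroup (Fin n) // Commute (g : Perm (Fin n)) x} = Nat.card K :=
    Nat.card_eq_of_bijective φ hbij
  rw [this]
  -- now compute card K
  have e1 : K ≃ {f : Perm (Fin n) // ∀ c, ¬(c ∉ ({a, b} : Finset (Fin n))) → f c = c} := by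
    apply Equiv.subtypeEquiv (Equiv.refl _)
    intro f
    simp only [Equiv.refl_apply, not_not, Finset.mem_insert, Finset.mem_singleton]
    constructor
    · rintro ⟨h1, h2⟩ c (rfl | rfl) <;> assumption
    · intro hf
      exact ⟨hf a (Or.inl rfl), hf b (Or.inr rfl)⟩
  have e2 : Perm {c : Fin n // c ∉ ({a, b} : Finset (Fin n))} ≃
      {f : Perm (Fin n) // ∀ c, ¬(c ∉ ({a, b} : Finset (Fin n))) → f c = c} :=
    Equiv.Perm.subtypeEquivSubtypePerm _
  rw [Nat.card_congr (e1.trans e2.symm), Nat.card_eq_fintype_card, Fintype.card_perm,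
    myCardCompl, Finset.card_pair hab, Fintype.card_fin]
end swap

section main
variable {n : ℕ}

lemma myCardEq (x : Perm (Fin n)) :
    Nat.card {g : alternatingGroup (Fin n) // Commute (g : Perm (Fin n)) x} =
      Nat.card (alternatingGroup (Fin n) ⊓ Subgroup.centralizer {x} : Subgroup (Perm (Fin n))) :=
  Nat.card_congr
    { toFun := fun g => ⟨(g : Perm (Fin n)),
        Subgroup.mem_inf.2 ⟨g.1.2, Subgroup.mem_centralizer_singleton_iff.2 g.2⟩⟩
      invFun := fun g => ⟨⟨(g : Perm (Fin n)), (Subgroup.mem_inf.1 g.2).1⟩,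
        Subgroup.mem_centralizer_singleton_iff.1 (Subgroup.mem_inf.1 g.2).2⟩
      left_inv := fun g => rfl
      right_inv := fun g => rfl }

lemma myUpper (hn : 7 ≤ n) (x : Perm (Fin n)) (hx : x ≠ 1) :
    Nat.card {g : alternatingGroup (Fin n) // Commute (g : Perm (Fin n)) x} ≤
      (n - 2).factorial := by
  by_cases hcyc : ∃ a, x (x a) ≠ a
  · obtain ⟨a, ha2⟩ := hcyc
    rw [myCardEq]
    -- case 1
    
    classical
    set C : Subgroup (Perm (Fin n)) := alternatingGroup (Fin n) ⊓ Subgroup.centralizer {x} with hC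
    have hCcomm : ∀ g : C, ∀ c : Fin n, (g : Perm (Fin n)) (x c) = x ((g : Perm (Fin n)) c) := by
      intro g c
      have hg : (g : Perm (Fin n)) * x = x * (g : Perm (Fin n)) := by
        have := (Subgroup.mem_inf.1 g.2).2
        rw [Subgroup.mem_centralizer_singleton_iff] at this
        exact this
      have := Equiv.ext_iff.1 hg c
      simpa [Perm.mul_apply] using this
    have ha1 : x a ≠ a := fun h => ha2 (by rw [h, h])
    set s : Finset (Fin n) := {a, x a, x (x a)} with hs
    have hd1 : a ≠ x a := ha1.symm
    have hd2 : x a ≠ x (x a) := fun h => ha1 (x.injective h).symm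
    have hd3 : a ≠ x (x a) := ha2.symm
    have hscard : s.card = 3 := by
      rw [hs, Finset.card_insert_of_notMem (by simp [hd1, hd3]),
        Finset.card_insert_of_notMem (by simp [hd2]), Finset.card_singleton]
    set G := MulAction.stabilizer C a with hG
    let ι : G →* Perm (Fin n) := C.subtype.comp G.subtype
    have hι : Function.Injective ι := Subtype.coe_injective.comp Subtype.coe_injective
    have hfixa : ∀ g : G, ι g a = a := by
      intro g
      have := g.2
      rw [MulAction.mem_stabilizer_iff] at this
      simpa [Subgroup.smul_def, Perm.smul_def, ι] using this
    have hfix : ∀ g : G, ∀ c ∈ s, ι g c = c := by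
      intro g c hc
      have h1 := hfixa g
      have hcast : (ι g : Perm (Fin n)) = ((g : C) : Perm (Fin n)) := rfl
      have h2 : ι g (x a) = x a := by rw [hcast, hCcomm ((g : C)) a, ← hcast, h1]
      have h3 : ι g (x (x a)) = x (x a) := by rw [hcast, hCcomm ((g : C)) (x a), ← hcast, h2]
      simp only [hs, Finset.mem_insert, Finset.mem_singleton] at hc
      rcases hc with rfl | rfl | rfl <;> assumption
    have hsign : ∀ g : G, Perm.sign (ι g) = 1 := fun g =>
      (Perm.mem_alternatingGroup).1 (Subgroup.mem_inf.1 (g : C).2).1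
    have hstab : 2 * Nat.card G ≤ (n - 3).factorial := by
      have := myCardLeAlt ι hι s hfix hsign (by rw [hscard, Fintype.card_fin]; omega)
      rwa [hscard, Fintype.card_fin] at this
    -- orbit-stabilizer
    letI : Fintype C := Fintype.ofFinite _
    letI : Fintype (MulAction.orbit C a) := Fintype.ofFinite _
    letI : Fintype G := Fintype.ofFinite _
    have hOS : Nat.card (MulAction.orbit C a) * Nat.card G = Nat.card C := by
      rw [Nat.card_eq_fintype_card, Nat.card_eq_fintype_card, Nat.card_eq_fintype_card]
      exact MulAction.card_orbit_mul_card_stabilizer_eq_card_group C a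
    have horb : Nat.card (MulAction.orbit C a) ≤ n := by
      calc Nat.card (MulAction.orbit C a) ≤ Nat.card (Fin n) :=
        Nat.card_le_card_of_injective Subtype.val Subtype.val_injective
      _ = n := by simp
    have final : Nat.card C ≤ (n - 2).factorial := by
      have key : 2 * Nat.card C ≤ n * (n - 3).factorial := by
        calc 2 * Nat.card C = Nat.card (MulAction.orbit C a) * (2 * Nat.card G) := by
              rw [← hOS]; ring
          _ ≤ n * (n - 3).factorial := Nat.mul_le_mul horb hstab
      have hf : (n - 2).factorial = (n - 2) * (n - 3).factorial := by
        have h32 : n - 2 = (n - 3) + 1 := by omega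
        rw [h32, Nat.factorial_succ]
      have : n * (n - 3).factorial ≤ 2 * (n - 2).factorial := by
        rw [hf, ← mul_assoc]
        exact Nat.mul_le_mul_right _ (by omega)
      omega

    exact final
  · push_neg at hcyc
    have hinv : ∀ c, x (x c) = c := hcyc
    have hex : ∃ a, x a ≠ a := by
      by_contra h
      push_neg at h
      exact hx (Equiv.ext h)
    obtain ⟨a, ha⟩ := hex
    by_cases hpair : ∃ b, x b ≠ b ∧ b ≠ a ∧ b ≠ x a
    · obtain ⟨b, hb, hba, hbxa⟩ := hpair
      rw [myCardEq]
      -- case 2a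
      
      classical
      set C : Subgroup (Perm (Fin n)) := alternatingGroup (Fin n) ⊓ Subgroup.centralizer {x} with hC
      have hCcomm : ∀ g : C, ∀ c : Fin n, (g : Perm (Fin n)) (x c) = x ((g : Perm (Fin n)) c) := by
        intro g c
        have hg : (g : Perm (Fin n)) * x = x * (g : Perm (Fin n)) := by
          have := (Subgroup.mem_inf.1 g.2).2
          rw [Subgroup.mem_centralizer_singleton_iff] at this
          exact this
        have := Equiv.ext_iff.1 hg c
        simpa [Perm.mul_apply] using this
      -- distinctness
      have hd_xb_a : x b ≠ a := fun h => hbxa (by rw [← h, hinv])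
      have hd_xb_xa : x b ≠ x a := fun h => hba (x.injective h)
      set s : Finset (Fin n) := {a, x a, b, x b} with hs
      have hscard : s.card = 4 := by
        rw [hs, Finset.card_insert_of_notMem (by simp [Ne.symm ha, hba.symm, hd_xb_a.symm]),
          Finset.card_insert_of_notMem (by simp [hbxa.symm, hd_xb_xa.symm]),
          Finset.card_insert_of_notMem (by simp [Ne.symm hb]), Finset.card_singleton]
      set G := MulAction.stabilizer C (a, b) with hG
      let ι : G →* Perm (Fin n) := C.subtype.comp G.subtype
      have hι : Function.Injective ι := Subtype.coe_injective.comp Subtype.coe_injective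
      have hfixab : ∀ g : G, ι g a = a ∧ ι g b = b := by
        intro g
        have hmem := g.2
        rw [MulAction.mem_stabilizer_iff] at hmem
        have : ((g : C) : Perm (Fin n)) a = a ∧ ((g : C) : Perm (Fin n)) b = b := by
          have h1 := congrArg Prod.fst hmem
          have h2 := congrArg Prod.snd hmem
          simp only [Prod.smul_fst, Prod.smul_snd, Subgroup.smul_def, Perm.smul_def] at h1 h2
          exact ⟨h1, h2⟩
        exact this
      have hfix : ∀ g : G, ∀ c ∈ s, ι g c = c := by
        intro g c hc
        have hcast : (ι g : Perm (Fin n)) = ((g : C) : Perm (Fin n)) := rfl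
        obtain ⟨h1, h2⟩ := hfixab g
        have h3 : ι g (x a) = x a := by rw [hcast, hCcomm ((g : C)) a, ← hcast, h1]
        have h4 : ι g (x b) = x b := by rw [hcast, hCcomm ((g : C)) b, ← hcast, h2]
        simp only [hs, Finset.mem_insert, Finset.mem_singleton] at hc
        rcases hc with rfl | rfl | rfl | rfl <;> assumption
      have hsign : ∀ g : G, Perm.sign (ι g) = 1 := fun g =>
        (Perm.mem_alternatingGroup).1 (Subgroup.mem_inf.1 (g : C).2).1
      have hstab : 2 * Nat.card G ≤ (n - 4).factorial := by
        have := myCardLeAlt ι hι s hfix hsign (by rw [hscard, Fintype.card_fin]; omega)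
        rwa [hscard, Fintype.card_fin] at this
      -- orbit bound
      set T : Set (Fin n × Fin n) := {p | x p.1 ≠ p.1 ∧ p.2 ≠ p.1 ∧ p.2 ≠ x p.1} with hT
      have horbT : MulAction.orbit C (a, b) ⊆ T := by
        rintro p ⟨g, rfl⟩
        show g • (a, b) ∈ T
        have hsmul : g • (a, b) = (((g : Perm (Fin n)) a), ((g : Perm (Fin n)) b)) := rfl
        rw [hsmul]
        refine ⟨?_, ?_, ?_⟩
        · simp only
          rw [← hCcomm g a]
          exact fun h => ha ((g : Perm (Fin n)).injective h)
        · exact fun h => hba ((g : Perm (Fin n)).injective h)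
        · simp only
          rw [← hCcomm g a]
          exact fun h => hbxa ((g : Perm (Fin n)).injective h)
      have hTcard : Nat.card T ≤ n * (n - 2) := by
        let St := (c : {c : Fin n // x c ≠ c}) × {d : Fin n // d ∉ ({(c : Fin n), x c} : Finset (Fin n))}
        let J : T → St := fun p =>
          ⟨⟨p.1.1, p.2.1⟩, ⟨p.1.2, by
            simp only [Finset.mem_insert, Finset.mem_singleton, not_or]
            exact ⟨p.2.2.1, p.2.2.2⟩⟩⟩
        have hJ : Function.Injective J := by
          intro p q h
          have : (p : Fin n × Fin n) = q := by
            have h1 := congrArg (fun r : St => ((r.1 : Fin n), (r.2 : Fin n))) h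
            simpa [J, Prod.ext_iff] using h1
          exact Subtype.ext this
        calc Nat.card T ≤ Nat.card St := Nat.card_le_card_of_injective J hJ
          _ = Fintype.card St := Nat.card_eq_fintype_card
          _ = ∑ c : {c : Fin n // x c ≠ c},
                Fintype.card {d : Fin n // d ∉ ({(c : Fin n), x c} : Finset (Fin n))} := by
              rw [Fintype.card_sigma]
          _ = ∑ _c : {c : Fin n // x c ≠ c}, (n - 2) := by
              apply Finset.sum_congr rfl
              intro c _
              rw [myCardCompl, Finset.card_pair (Ne.symm c.2), Fintype.card_fin]
          _ = Fintype.card {c : Fin n // x c ≠ c} * (n - 2) := by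
              rw [Finset.sum_const, smul_eq_mul, Finset.card_univ]
          _ ≤ n * (n - 2) := by
              have := Fintype.card_subtype_le (fun c : Fin n => x c ≠ c)
              rw [Fintype.card_fin] at this
              exact Nat.mul_le_mul_right _ this
      have horb : Nat.card (MulAction.orbit C (a, b)) ≤ n * (n - 2) :=
        le_trans (Nat.card_le_card_of_injective (Set.inclusion horbT) (Set.inclusion_injective horbT))
          hTcard
      -- orbit-stabilizer
      letI : Fintype C := Fintype.ofFinite _
      letI : Fintype (MulAction.orbit C (a, b)) := Fintype.ofFinite _
      letI : Fintype G := Fintype.ofFinite _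
      have hOS : Nat.card (MulAction.orbit C (a, b)) * Nat.card G = Nat.card C := by
        rw [Nat.card_eq_fintype_card, Nat.card_eq_fintype_card, Nat.card_eq_fintype_card]
        exact MulAction.card_orbit_mul_card_stabilizer_eq_card_group C (a, b)
      have final : Nat.card C ≤ (n - 2).factorial := by
        have key : 2 * Nat.card C ≤ (n * (n - 2)) * (n - 4).factorial := by
          calc 2 * Nat.card C = Nat.card (MulAction.orbit C (a, b)) * (2 * Nat.card G) := by
                rw [← hOS]; ring
            _ ≤ (n * (n - 2)) * (n - 4).factorial := Nat.mul_le_mul horb hstab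
        have hf : (n - 2).factorial = (n - 2) * ((n - 3) * (n - 4).factorial) := by
          have h1 : n - 2 = (n - 3) + 1 := by omega
          have h2 : n - 3 = (n - 4) + 1 := by omega
          rw [h1, Nat.factorial_succ, ← h1, h2, Nat.factorial_succ, ← h2]
        have : (n * (n - 2)) * (n - 4).factorial ≤ 2 * (n - 2).factorial := by
          rw [hf]
          calc (n * (n - 2)) * (n - 4).factorial ≤ ((2 * (n - 3)) * (n - 2)) * (n - 4).factorial := by
                apply Nat.mul_le_mul_right
                apply Nat.mul_le_mul_right
                omega
            _ = 2 * ((n - 2) * ((n - 3) * (n - 4).factorial)) := by ring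
        omega

      exact final
    · push_neg at hpair
      have hxs : x = Equiv.swap a (x a) := by
        ext c
        by_cases h1 : c = a
        · subst h1; rw [Equiv.swap_apply_left]
        · by_cases h2 : c = x a
          · subst h2; rw [Equiv.swap_apply_right, hinv]
          · have hfix : x c = c := by
              by_contra h3
              exact h2 (hpair c h3 h1)
            rw [hfix, Equiv.swap_apply_of_ne_of_ne h1 h2]
      rw [hxs, mySwapCard (by omega) (Ne.symm ha)]

end main

/-- For `n ≥ 7`, the maximum of `|C_{Aₙ}(x)|` over non-identity `x ∈ Sₙ` is `(n-2)!`,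
attained when `x` is a transposition. -/
theorem stmt5 (n : ℕ) (hn : 7 ≤ n) :
    IsGreatest {c : ℕ | ∃ x : Equiv.Perm (Fin n), x ≠ 1 ∧
        c = Nat.card {g : alternatingGroup (Fin n) // Commute (g : Equiv.Perm (Fin n)) x}}
      (n - 2).factorial ∧
    ∃ x : Equiv.Perm (Fin n), x.IsSwap ∧
      Nat.card {g : alternatingGroup (Fin n) // Commute (g : Equiv.Perm (Fin n)) x} =
        (n - 2).factorial := by
  set a : Fin n := ⟨0, by omega⟩
  set b : Fin n := ⟨1, by omega⟩
  have hab : a ≠ b := by simp [a, b, Fin.ext_iff]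
  refine ⟨⟨⟨Equiv.swap a b, fun h => hab (Equiv.swap_eq_one_iff.1 h),
      (mySwapCard (by omega) hab).symm⟩, ?_⟩,
    Equiv.swap a b, ⟨a, b, hab, rfl⟩, mySwapCard (by omega) hab⟩
  rintro c ⟨x, hx1, rfl⟩
  exact myUpper hn x hx1
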